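/- Let X = (ω+1) × ω₁ and let γX be a Hausdorff compactification of X whose remainder γX \ X is infinite. Then the remainder γX \ X is homeomorphic to ω+1. -/

import Mathlib

open Filter Topology Set

universe u v

/-- `x` has a neighbourhood base in the subspace `S` well-ordered by reverse inclusion. -/
def HasWONhdsBase {X : Type u} [TopologicalSpace X] (x : X) (S : Set X) : Prop :=
  ∃ (o : Ordinal.{u}) (B : ↥(Set.Iio o) → Set X),
    (∀ i, B i ⊆ S) ∧ (∀ i j, i ≤ j → B j ⊆ B i) ∧
    (𝓝[S] x).HasBasis (fun _ => True) B

/-- `X` is radial at `x`. -/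
def RadialAt (X : Type u) [TopologicalSpace X] (x : X) : Prop :=
  ∀ A : Set X, x ∈ closure A →
    ∃ (o : Ordinal.{u}) (f : ↥(Set.Iio o) → X), o ≠ 0 ∧
      (∀ i, f i ∈ A) ∧ Filter.Tendsto f Filter.atTop (𝓝 x)
noncomputable def om1 : Ordinal.{0} := (Cardinal.aleph 1).ord

abbrev X15 : Type 1 := ↥(Set.Iic Ordinal.omega0.{0}) × ↥(Set.Iio om1)

namespace TP

abbrev Om : Type 1 := ↥(Set.Iic Ordinal.omega0.{0})
abbrev W : Type 1 := ↥(Set.Iio om1)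

lemma omega0_lt_om1 : Ordinal.omega0 < om1 := by
  rw [om1, ← Cardinal.ord_aleph0]
  exact Cardinal.ord_lt_ord.2 (by simpa using Cardinal.aleph0_lt_aleph_one)

lemma om1_isLimit : Order.IsSuccLimit om1 := Cardinal.isSuccLimit_ord (by simpa using Cardinal.aleph0_le_aleph 1)

lemma iSup_lt_om1 {α : Type} [Countable α] (f : α → Ordinal.{0}) (h : ∀ i, f i < om1) :
    ⨆ i, f i < om1 := by
  have h1 : om1 = Ordinal.omega 1 := by rw [om1]; exact Cardinal.ord_aleph 1
  rw [h1] at h ⊢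
  exact Ordinal.iSup_lt_omega_one h

instance : Nonempty W := ⟨⟨0, Ordinal.omega0_pos.trans omega0_lt_om1⟩⟩

instance : CompactSpace Om :=
  isCompact_iff_compactSpace.mp (by rw [← Set.Icc_bot]; exact isCompact_Icc)

instance : Countable Om := by
  have : Function.Surjective (fun o : Option ℕ => (match o with
    | some n => ⟨(n : Ordinal), Set.mem_Iic.mpr (Ordinal.nat_lt_omega0 n).le⟩
    | none => ⟨Ordinal.omega0, Set.mem_Iic.mpr le_rfl⟩ : Om)) := by
    rintro ⟨x, hx⟩
    rcases (Set.mem_Iic.mp hx).lt_or_eq with h | h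
    · obtain ⟨n, rfl⟩ := Ordinal.lt_omega0.mp h
      exact ⟨some n, rfl⟩
    · exact ⟨none, by simp [h]⟩
  exact this.countable

/-- The top point `ω` of `ω + 1`. -/
def top : Om := ⟨Ordinal.omega0, Set.mem_Iic.mpr le_rfl⟩

lemma val_lt_of_ne_top {x : Om} (hx : x ≠ top) : x.val < Ordinal.omega0 :=
  lt_of_le_of_ne (Set.mem_Iic.mp x.2) (fun h => hx (Subtype.ext h))

/-- Points below `ω` are isolated in `ω + 1`. -/
lemma isolated {x : Om} (hx : x.val < Ordinal.omega0) : IsOpen ({x} : Set Om) := by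
  obtain ⟨m, hm⟩ := Ordinal.lt_omega0.mp hx
  cases m with
  | zero =>
    have h : ({x} : Set Om) = Subtype.val ⁻¹' Set.Iio 1 := by
      ext y
      simp only [Set.mem_singleton_iff, Set.mem_preimage, Set.mem_Iio]
      constructor
      · rintro rfl; rw [hm]; simpa using zero_lt_one
      · intro hy
        apply Subtype.ext
        rw [hm]
        simpa using Ordinal.lt_one_iff_zero.mp hy
    rw [h]
    exact isOpen_Iio.preimage continuous_subtype_val
  | succ k =>
    have h : ({x} : Set Om) = Subtype.val ⁻¹' Set.Ioo (k : Ordinal) ((k : Ordinal) + 1 + 1) := by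
      have hx' : x.val = (k : Ordinal) + 1 := by rw [hm]; push_cast; ring
      ext y
      simp only [Set.mem_singleton_iff, Set.mem_preimage, Set.mem_Ioo]
      constructor
      · rintro rfl
        exact ⟨hx' ▸ lt_of_lt_of_le (Order.lt_succ _) (by rw [Ordinal.add_one_eq_succ]),
          hx' ▸ lt_of_lt_of_le (Order.lt_succ _) (by rw [Ordinal.add_one_eq_succ])⟩
      · rintro ⟨h1, h2⟩
        apply Subtype.ext
        rw [hx']
        have h1' : (k : Ordinal) + 1 ≤ y.val := by
          rw [Ordinal.add_one_eq_succ]; exact Order.succ_le_of_lt h1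
        have h2' : y.val ≤ (k : Ordinal) + 1 := by
          rw [Ordinal.add_one_eq_succ] at h2 ⊢
          exact Order.le_of_lt_succ h2
        exact le_antisymm h2' h1'
    rw [h]
    exact isOpen_Ioo.preimage continuous_subtype_val

/-- A sequence of naturals (as elements of `ω+1`) with `k < m k` tends to `ω`. -/
lemma tendsto_natSeq (m : ℕ → ℕ) (hm : ∀ k, k < m k) :
    Tendsto (fun k => (⟨((m k : ℕ) : Ordinal), Set.mem_Iic.mpr (Ordinal.nat_lt_omega0 _).le⟩ : Om))
      atTop (𝓝 top) := by
  rw [IsEmbedding.subtypeVal.tendsto_nhds_iff]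
  show Tendsto (fun k => ((m k : ℕ) : Ordinal)) atTop (𝓝 Ordinal.omega0)
  rw [tendsto_order]
  constructor
  · intro b hb
    obtain ⟨j, rfl⟩ := Ordinal.lt_omega0.mp hb
    filter_upwards [eventually_ge_atTop j] with k hk
    exact_mod_cast lt_of_le_of_lt hk (hm k)
  · intro b hb
    exact Eventually.of_forall fun k => (Ordinal.nat_lt_omega0 _).trans hb

section Main

variable {γ : Type v} [TopologicalSpace γ] [CompactSpace γ] [T2Space γ]

/-- Any continuous map from ω₁ to a compact Hausdorff space converges along `atTop`. -/
lemma exists_tendsto_atTop (f : W → γ) (hf : Continuous f) : ∃ p, Tendsto f atTop (𝓝 p) := by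
  have huniq : ∀ p q : γ, MapClusterPt p atTop f → MapClusterPt q atTop f → p = q := by
    intro p q hp hq
    by_contra hne
    obtain ⟨U, V, hU, hV, hpU, hqV, hUV⟩ := t2_separation hne
    obtain ⟨C₁, hC₁n, hC₁c, hC₁U⟩ := exists_mem_nhds_isClosed_subset (hU.mem_nhds hpU)
    obtain ⟨C₂, hC₂n, hC₂c, hC₂V⟩ := exists_mem_nhds_isClosed_subset (hV.mem_nhds hqV)
    have hA : ∀ w : W, ∃ c, w ≤ c ∧ f c ∈ C₁ := by
      have := frequently_atTop.mp (mapClusterPt_iff_frequently.mp hp C₁ hC₁n)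
      intro w; obtain ⟨c, hc, hfc⟩ := this w; exact ⟨c, hc, hfc⟩
    have hB : ∀ w : W, ∃ c, w ≤ c ∧ f c ∈ C₂ := by
      have := frequently_atTop.mp (mapClusterPt_iff_frequently.mp hq C₂ hC₂n)
      intro w; obtain ⟨c, hc, hfc⟩ := this w; exact ⟨c, hc, hfc⟩
    let next : W → W × W := fun w =>
      ⟨(hA w).choose, (hB (hA w).choose).choose⟩
    let s : ℕ → W × W := fun n => Nat.rec (next (Classical.arbitrary W))
      (fun _ ih => next ih.2) n
    set a : ℕ → W := fun n => (s n).1 with ha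
    set b : ℕ → W := fun n => (s n).2 with hb
    have hnext : ∀ w : W, (next w).1 ≤ (next w).2 ∧ f (next w).1 ∈ C₁ ∧ f (next w).2 ∈ C₂ :=
      fun w => ⟨((hB (hA w).choose).choose_spec).1, ((hA w).choose_spec).2,
        ((hB (hA w).choose).choose_spec).2⟩
    have hab : ∀ n, a n ≤ b n := by
      intro n; cases n with
      | zero => exact (hnext (Classical.arbitrary W)).1
      | succ m => exact (hnext (b m)).1
    have hba : ∀ n, b n ≤ a (n + 1) := fun n => ((hA (b n)).choose_spec).1
    have hfa : ∀ n, f (a n) ∈ C₁ := by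
      intro n; cases n with
      | zero => exact (hnext (Classical.arbitrary W)).2.1
      | succ m => exact (hnext (b m)).2.1
    have hfb : ∀ n, f (b n) ∈ C₂ := by
      intro n; cases n with
      | zero => exact (hnext (Classical.arbitrary W)).2.2
      | succ m => exact (hnext (b m)).2.2
    have hmono : Monotone fun n => ((a n : W) : Ordinal) := by
      apply monotone_nat_of_le_succ
      intro n
      exact_mod_cast le_trans (hab n) (hba n)
    have hmonob : Monotone fun n => ((b n : W) : Ordinal) := by
      apply monotone_nat_of_le_succ
      intro n
      exact_mod_cast le_trans (hba n) (hab (n + 1))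
    set δ : Ordinal := ⨆ n, ((a n : W) : Ordinal) with hδdef
    have hδ : δ < om1 := iSup_lt_om1 _ (fun n => (a n).2)
    have hbddA : BddAbove (range fun n => ((a n : W) : Ordinal)) :=
      ⟨om1, by rintro _ ⟨n, rfl⟩; exact ((a n).2).le⟩
    have hbddB : BddAbove (range fun n => ((b n : W) : Ordinal)) :=
      ⟨om1, by rintro _ ⟨n, rfl⟩; exact ((b n).2).le⟩
    have hδb : (⨆ n, ((b n : W) : Ordinal)) = δ := by
      apply le_antisymm
      · exact ciSup_le fun n => le_trans (by exact_mod_cast hba n) (le_ciSup hbddA (n + 1))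
      · exact ciSup_le fun n => le_trans (by exact_mod_cast hab n) (le_ciSup hbddB n)
    set δW : W := ⟨δ, hδ⟩ with hδW
    have hta : Tendsto a atTop (𝓝 δW) := by
      rw [IsEmbedding.subtypeVal.tendsto_nhds_iff]
      exact tendsto_atTop_ciSup hmono hbddA
    have htb : Tendsto b atTop (𝓝 δW) := by
      rw [IsEmbedding.subtypeVal.tendsto_nhds_iff]
      have := tendsto_atTop_ciSup hmonob hbddB
      rwa [hδb] at this
    have h1 : f δW ∈ C₁ :=
      hC₁c.mem_of_tendsto ((hf.tendsto δW).comp hta) (Eventually.of_forall hfa)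
    have h2 : f δW ∈ C₂ :=
      hC₂c.mem_of_tendsto ((hf.tendsto δW).comp htb) (Eventually.of_forall hfb)
    exact hUV.le_bot ⟨hC₁U h1, hC₂V h2⟩
  obtain ⟨p, hp⟩ := exists_clusterPt_of_compactSpace (map f atTop)
  exact ⟨p, tendsto_nhds_of_unique_mapClusterPt (fun x hx => huniq x p hx hp)⟩

variable (e : X15 → γ)

variable (he : Continuous e)

/-- The limit point of the `n`-th column. -/
noncomputable def colLim (n : Om) : γ :=
  (exists_tendsto_atTop (fun β : W => e (n, β)) (he.comp (continuous_const.prodMk continuous_id))).choose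

lemma tendsto_colLim (n : Om) :
    Tendsto (fun β : W => e (n, β)) atTop (𝓝 (colLim e he n)) :=
  (exists_tendsto_atTop (fun β : W => e (n, β))
    (he.comp (continuous_const.prodMk continuous_id))).choose_spec

lemma colLim_not_mem (hemb : Topology.IsEmbedding e) (n : Om) :
    colLim e he n ∉ Set.range e := by
  rintro ⟨x, hx⟩
  -- the tail of the `n`-th column beyond `x.2`
  have hsucc : x.2.val + 1 < om1 := by
    rw [Ordinal.add_one_eq_succ]
    exact om1_isLimit.succ_lt x.2.2
  set c : W := ⟨x.2.val + 1, hsucc⟩ with hc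
  set S : Set X15 := (fun β : W => ((n, β) : X15)) '' Set.Ici c with hS
  have hmem : colLim e he n ∈ closure (e '' S) := by
    have h1 : MapClusterPt (colLim e he n) atTop (fun β : W => e (n, β)) :=
      (tendsto_colLim e he n).mapClusterPt
    have h2 : map (fun β : W => e (n, β)) atTop ≤ 𝓟 (e '' S) := by
      rw [le_principal_iff, mem_map]
      filter_upwards [Ici_mem_atTop c] with β hβ
      exact ⟨(n, β), ⟨β, hβ, rfl⟩, rfl⟩
    rw [mem_closure_iff_clusterPt]
    exact h1.clusterPt.mono h2
  have hx_cl : x ∈ closure S := by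
    rw [hemb.closure_eq_preimage_closure_image S]
    rw [Set.mem_preimage, hx]
    exact hmem
  -- but `x` has a neighbourhood disjoint from `S`
  have : ∃ z, z ∈ (Set.univ ×ˢ (Subtype.val ⁻¹' Set.Iio (x.2.val + 1)) : Set X15) ∩ S := by
    apply mem_closure_iff.mp hx_cl
    · exact isOpen_univ.prod (isOpen_Iio.preimage continuous_subtype_val)
    · exact ⟨Set.mem_univ _, by show x.2.val < x.2.val + 1; rw [Ordinal.add_one_eq_succ]; exact Order.lt_succ _⟩
  obtain ⟨z, ⟨-, hz2⟩, ⟨β, hβ, rfl⟩⟩ := this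
  simp only [Set.mem_preimage, Set.mem_Iio] at hz2
  exact absurd hz2 (not_lt.mpr hβ)

/-- The column limits converge: `colLim` is continuous at the top point. -/
lemma colLim_continuousAt_top (hemb : Topology.IsEmbedding e) :
    ContinuousAt (colLim e he) top := by
  intro U hU
  obtain ⟨O, hOU, hO, hpO⟩ := mem_nhds_iff.mp hU
  obtain ⟨C, hCn, hCc, hCO⟩ := exists_mem_nhds_isClosed_subset (hO.mem_nhds hpO)
  set V : Set γ := interior C with hV
  have hpV : colLim e he top ∈ V := mem_interior_iff_mem_nhds.mpr hCn
  have hkey : ∃ N : ℕ, ∀ x : Om, ((N : ℕ) : Ordinal) < x.val → colLim e he x ∈ U := by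
    by_contra hcon
    push_neg at hcon
    -- extract a sequence of bad columns
    have hbad : ∀ k : ℕ, ∃ m : ℕ, k < m ∧
        colLim e he ⟨((m : ℕ) : Ordinal), Set.mem_Iic.mpr (Ordinal.nat_lt_omega0 _).le⟩ ∉ U := by
      intro k
      obtain ⟨x, hxk, hxU⟩ := hcon k
      have hxne : x ≠ top := by
        rintro rfl
        exact hxU (hOU (hCO (interior_subset hpV)))
      obtain ⟨m, hm⟩ := Ordinal.lt_omega0.mp (val_lt_of_ne_top hxne)
      refine ⟨m, ?_, ?_⟩
      · rw [hm] at hxk; exact_mod_cast hxk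
      · rw [show (⟨((m : ℕ) : Ordinal), Set.mem_Iic.mpr (Ordinal.nat_lt_omega0 _).le⟩ : Om) = x
          from Subtype.ext hm.symm]
        exact hxU
    choose m hm hmU using hbad
    set xs : ℕ → Om := fun k =>
      ⟨((m k : ℕ) : Ordinal), Set.mem_Iic.mpr (Ordinal.nat_lt_omega0 _).le⟩ with hxs
    -- each bad column is eventually outside V
    have hout : ∀ k : ℕ, ∃ α : W, ∀ β ≥ α, e (xs k, β) ∉ V := by
      intro k
      have h1 : colLim e he (xs k) ∈ Cᶜ := fun h => hmU k (hOU (hCO h))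
      have h2 : ∀ᶠ β in atTop, e (xs k, β) ∈ Cᶜ :=
        (tendsto_colLim e he (xs k)) (hCc.isOpen_compl.mem_nhds h1)
      obtain ⟨α, hα⟩ := eventually_atTop.mp h2
      exact ⟨α, fun β hβ hmem => hα β hβ (interior_subset hmem)⟩
    choose α hα using hout
    set δ : Ordinal := ⨆ k, (α k).val with hδ
    have hδlt : δ < om1 := iSup_lt_om1 _ (fun k => (α k).2)
    have hbdd : BddAbove (range fun k => (α k).val) :=
      ⟨om1, by rintro _ ⟨k, rfl⟩; exact ((α k).2).le⟩
    -- the top column is eventually in V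
    have htopV : ∀ᶠ β in atTop, e (top, β) ∈ V :=
      (tendsto_colLim e he top) (isOpen_interior.mem_nhds hpV)
    obtain ⟨β₀, hβ₀⟩ := eventually_atTop.mp htopV
    set βs : W := max ⟨δ, hδlt⟩ β₀ with hβs
    have hβsV : e (top, βs) ∈ V := hβ₀ βs (le_max_right _ _)
    -- but columns converge pointwise to the top column
    have hconv : Tendsto (fun k => e (xs k, βs)) atTop (𝓝 (e (top, βs))) := by
      have h1 : Tendsto xs atTop (𝓝 top) := tendsto_natSeq m hm
      have h2 : Continuous fun y : Om => e (y, βs) :=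
        he.comp (continuous_id.prodMk continuous_const)
      exact (h2.tendsto top).comp h1
    have : ∀ᶠ k in atTop, e (xs k, βs) ∈ V := hconv (isOpen_interior.mem_nhds hβsV)
    obtain ⟨k, hk⟩ := this.exists
    apply hα k βs _ hk
    refine le_trans ?_ (le_max_left _ _)
    show (α k).val ≤ δ
    exact le_ciSup hbdd k
  obtain ⟨N, hN⟩ := hkey
  apply mem_of_superset (IsOpen.mem_nhds
    ((isOpen_Ioi.preimage continuous_subtype_val :
      IsOpen (Subtype.val ⁻¹' Set.Ioi ((N : ℕ) : Ordinal) : Set Om))) ?_)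
  · intro x hx
    exact hN x hx
  · exact Ordinal.nat_lt_omega0 N

lemma colLim_continuous (hemb : Topology.IsEmbedding e) : Continuous (colLim e he) := by
  rw [continuous_iff_continuousAt]
  intro x
  by_cases hx : x = top
  · subst hx; exact colLim_continuousAt_top e he hemb
  · have hiso : IsOpen ({x} : Set Om) := isolated (val_lt_of_ne_top hx)
    have : 𝓝 x = pure x := (isOpen_singleton_iff_nhds_eq_pure x).mp hiso
    rw [ContinuousAt, this]
    exact tendsto_pure_nhds _ x

lemma range_colLim (hemb : Topology.IsEmbedding e) (hd : DenseRange e) :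
    Set.range (colLim e he) = (Set.range e)ᶜ := by
  apply Set.eq_of_subset_of_subset
  · rintro _ ⟨n, rfl⟩
    exact colLim_not_mem e he hemb n
  · intro y hy
    by_contra hyK
    set K : Set γ := Set.range (colLim e he) with hK
    have hKcomp : IsCompact K := isCompact_range (colLim_continuous e he hemb)
    obtain ⟨C, hCn, hCc, hCK⟩ :=
      exists_mem_nhds_isClosed_subset ((hKcomp.isClosed.isOpen_compl).mem_nhds hyK)
    have hyC : y ∈ interior C := mem_interior_iff_mem_nhds.mpr hCn
    -- each column is eventually outside C
    have hout : ∀ n : Om, ∃ α : W, ∀ β ≥ α, e (n, β) ∉ C := by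
      intro n
      have h1 : colLim e he n ∈ Cᶜ := fun h => (hCK h) ⟨n, rfl⟩
      obtain ⟨α, hα⟩ := eventually_atTop.mp
        ((tendsto_colLim e he n) (hCc.isOpen_compl.mem_nhds h1))
      exact ⟨α, hα⟩
    choose α hα using hout
    -- a countable sup bounds all the α's (reindex through Option ℕ)
    obtain ⟨σ, hσ⟩ : ∃ σ : Option ℕ → Om, Function.Surjective σ := by
      have : Function.Surjective (fun o : Option ℕ => (match o with
        | some n => ⟨(n : Ordinal), Set.mem_Iic.mpr (Ordinal.nat_lt_omega0 n).le⟩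
        | none => ⟨Ordinal.omega0, Set.mem_Iic.mpr le_rfl⟩ : Om)) := by
        rintro ⟨x, hx⟩
        rcases (Set.mem_Iic.mp hx).lt_or_eq with h | h
        · obtain ⟨n, rfl⟩ := Ordinal.lt_omega0.mp h
          exact ⟨some n, rfl⟩
        · exact ⟨none, by simp [h]⟩
      exact ⟨_, this⟩
    set δ : Ordinal := ⨆ o : Option ℕ, (α (σ o)).val with hδ
    have hδlt : δ < om1 := iSup_lt_om1 _ (fun o => (α (σ o)).2)
    have hbdd : BddAbove (range fun o : Option ℕ => (α (σ o)).val) :=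
      ⟨om1, by rintro _ ⟨o, rfl⟩; exact ((α (σ o)).2).le⟩
    have hαδ : ∀ n : Om, (α n).val ≤ δ := by
      intro n
      obtain ⟨o, rfl⟩ := hσ n
      exact le_ciSup hbdd o
    -- the compact "rectangle"
    set Sβ : Set W := {β : W | β.val ≤ δ} with hSβ
    have hSβcomp : IsCompact Sβ := by
      haveI : CompactSpace ↥(Set.Icc (0 : Ordinal) δ) :=
        isCompact_iff_compactSpace.mp isCompact_Icc
      have hcont : Continuous (fun o : ↥(Set.Icc (0 : Ordinal) δ) =>
          (⟨o.val, lt_of_le_of_lt o.2.2 hδlt⟩ : W)) :=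
        Continuous.subtype_mk continuous_subtype_val _
      have : Set.range (fun o : ↥(Set.Icc (0 : Ordinal) δ) =>
          (⟨o.val, lt_of_le_of_lt o.2.2 hδlt⟩ : W)) = Sβ := by
        ext β
        constructor
        · rintro ⟨o, rfl⟩; exact o.2.2
        · intro hβ
          exact ⟨⟨β.val, Set.mem_Icc.mpr ⟨zero_le, hβ⟩⟩, Subtype.ext rfl⟩
      rw [← this]
      exact isCompact_range hcont
    set Krect : Set X15 := Set.univ ×ˢ Sβ with hKrect
    have hKrcomp : IsCompact Krect := isCompact_univ.prod hSβcomp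
    have heKcl : IsClosed (e '' Krect) := (hKrcomp.image he).isClosed
    -- the open set around y misses the range of e: contradiction with density
    have hopen : IsOpen (interior C \ e '' Krect) := isOpen_interior.sdiff heKcl
    have hymem : y ∈ interior C \ e '' Krect := by
      refine ⟨hyC, fun hmem => hy ?_⟩
      obtain ⟨z, -, hz⟩ := hmem
      exact ⟨z, hz⟩
    obtain ⟨x, hx⟩ := hd.exists_mem_open hopen ⟨y, hymem⟩
    have hxC : e x ∈ C := interior_subset hx.1
    have hxK : x ∈ Krect := by
      refine ⟨Set.mem_univ _, ?_⟩
      show x.2.val ≤ δ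
      have hlt : x.2 < α x.1 := by
        by_contra hge
        exact hα x.1 x.2 (not_lt.mp hge) (by rw [Prod.mk.eta]; exact hxC)
      exact le_trans (le_of_lt (by exact_mod_cast hlt)) (hαδ x.1)
    exact hx.2 ⟨x, hxK, rfl⟩

/-- Every point of the remainder other than the top column limit is isolated
in the remainder. -/
lemma isolated_in_remainder (hemb : Topology.IsEmbedding e) (hd : DenseRange e)
    {y : γ} (hy : y ∈ (Set.range e)ᶜ) (hyne : y ≠ colLim e he top) :
    ∃ Wo : Set γ, IsOpen Wo ∧ Wo ∩ (Set.range e)ᶜ = {y} := by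
  have hrange := range_colLim e he hemb hd
  set A : Set Om := {k | colLim e he k = y} with hA
  have htopA : top ∉ A := fun h => hyne h.symm
  have hAopen : IsOpen A := by
    rw [← Set.biUnion_of_singleton A]
    exact isOpen_biUnion fun x hx =>
      isolated (val_lt_of_ne_top (fun h => htopA (h ▸ hx)))
  have hAc : IsCompact Aᶜ := (hAopen.isClosed_compl).isCompact
  have hTcl : IsClosed (colLim e he '' Aᶜ) :=
    (hAc.image (colLim_continuous e he hemb)).isClosed
  refine ⟨(colLim e he '' Aᶜ)ᶜ, hTcl.isOpen_compl, ?_⟩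
  ext z
  constructor
  · rintro ⟨hzT, hzR⟩
    rw [← hrange] at hzR
    obtain ⟨k, rfl⟩ := hzR
    have hkA : k ∈ A := by
      by_contra hk
      exact hzT ⟨k, hk, rfl⟩
    exact hkA
  · rintro rfl
    refine ⟨?_, hy⟩
    rintro ⟨k, hk, hky⟩
    exact hk hky

end Main

noncomputable def natOf {x : Om} (h : x.val < Ordinal.omega0) : ℕ :=
  (Ordinal.lt_omega0.mp h).choose

lemma natOf_spec {x : Om} (h : x.val < Ordinal.omega0) : x.val = ((natOf h : ℕ) : Ordinal) :=
  (Ordinal.lt_omega0.mp h).choose_spec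

lemma natOf_cast {k : ℕ} {x : Om} (hx : x.val = ((k : ℕ) : Ordinal))
    (h : x.val < Ordinal.omega0) : natOf h = k := by
  have := natOf_spec h
  rw [hx] at this
  exact_mod_cast this.symm

end TP

open TP in
theorem stmt15 {γ : Type v} [TopologicalSpace γ] [CompactSpace γ] [T2Space γ]
    (e : X15 → γ) (he : Topology.IsEmbedding e) (hd : DenseRange e)
    (hinf : ((Set.range e)ᶜ).Infinite) :
    Nonempty (↥((Set.range e)ᶜ) ≃ₜ ↥(Set.Iic Ordinal.omega0.{0})) := by
  have he' : Continuous e := he.continuous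
  set R : Set γ := (Set.range e)ᶜ with hRdef
  have hrange : Set.range (colLim e he') = R := range_colLim e he' he hd
  set pT : γ := colLim e he' top with hpinf
  have hpTR : pT ∈ R := by rw [← hrange]; exact ⟨_, rfl⟩
  have hRcomp : IsCompact R := by
    rw [← hrange]; exact isCompact_range (colLim_continuous e he' he)
  have hRcount : R.Countable := by rw [← hrange]; exact countable_range _
  -- an enumeration of R \ {pT}
  have hR'count : (R \ {pT}).Countable := hRcount.mono diff_subset
  have hR'inf : (R \ {pT}).Infinite := hinf.diff (Set.finite_singleton _)
  haveI : Countable ↥(R \ {pT}) := hR'count.to_subtype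
  haveI : Infinite ↥(R \ {pT}) := Set.infinite_coe_iff.mpr hR'inf
  obtain ⟨d⟩ := (nonempty_denumerable_iff (α := ↥(R \ {pT}))).mpr ⟨inferInstance, inferInstance⟩
  set q : ℕ ≃ ↥(R \ {pT}) := (@Denumerable.eqv ↥(R \ {pT}) d).symm with hq
  -- the bijection
  set φ : Om → ↥R := fun x =>
    if h : x.val < Ordinal.omega0 then ⟨(q (natOf h)).val, (q (natOf h)).2.1⟩
    else ⟨pT, hpTR⟩ with hφ
  have hφ_nat : ∀ (k : ℕ) (x : Om) (hx : x.val = ((k : ℕ) : Ordinal)),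
      φ x = ⟨(q k).val, (q k).2.1⟩ := by
    intro k x hx
    have h : x.val < Ordinal.omega0 := hx ▸ Ordinal.nat_lt_omega0 k
    rw [hφ]
    simp only
    rw [dif_pos h, natOf_cast hx h]
  have hφ_top : ∀ (x : Om), ¬ x.val < Ordinal.omega0 → φ x = ⟨pT, hpTR⟩ := by
    intro x hx
    rw [hφ]
    simp only
    rw [dif_neg hx]
  have htop_eq : ∀ x : Om, ¬ x.val < Ordinal.omega0 → x = top := by
    intro x hx
    exact Subtype.ext (le_antisymm (Set.mem_Iic.mp x.2) (not_lt.mp hx))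
  have hinj : Function.Injective φ := by
    intro x x' hxx'
    by_cases hx : x.val < Ordinal.omega0 <;> by_cases hx' : x'.val < Ordinal.omega0
    · rw [hφ_nat (natOf hx) x (natOf_spec hx), hφ_nat (natOf hx') x' (natOf_spec hx')] at hxx'
      have hnn : natOf hx = natOf hx' := q.injective (Subtype.ext (Subtype.mk_eq_mk.mp hxx'))
      apply Subtype.ext
      rw [natOf_spec hx, natOf_spec hx', hnn]
    · rw [hφ_nat (natOf hx) x (natOf_spec hx), hφ_top x' hx'] at hxx'
      exact absurd (Subtype.mk_eq_mk.mp hxx') (q (natOf hx)).2.2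
    · rw [hφ_top x hx, hφ_nat (natOf hx') x' (natOf_spec hx')] at hxx'
      exact absurd (Subtype.mk_eq_mk.mp hxx').symm (q (natOf hx')).2.2
    · rw [htop_eq x hx, htop_eq x' hx']
  have hsurj : Function.Surjective φ := by
    intro z
    by_cases hz : z.val = pT
    · refine ⟨top, ?_⟩
      rw [hφ_top top (lt_irrefl _)]
      exact Subtype.ext hz.symm
    · set z' : ↥(R \ {pT}) := ⟨z.val, ⟨z.2, hz⟩⟩ with hz'
      refine ⟨⟨((q.symm z' : ℕ) : Ordinal),
        Set.mem_Iic.mpr (Ordinal.nat_lt_omega0 _).le⟩, ?_⟩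
      rw [hφ_nat (q.symm z') _ rfl]
      apply Subtype.ext
      show (q (q.symm z')).val = z.val
      rw [q.apply_symm_apply]
  -- continuity of φ
  have hφcont : Continuous φ := by
    rw [continuous_iff_continuousAt]
    intro x
    by_cases hx : x = top
    · subst hx
      intro U hU
      rw [mem_map]
      rw [hφ_top top (lt_irrefl _)] at hU
      rw [nhds_subtype_eq_comap] at hU
      obtain ⟨V, hV, hVU⟩ := hU
      obtain ⟨O, hOV, hO, hpO⟩ := mem_nhds_iff.mp hV
      -- the part of R outside O is finite-ish: covered by finitely many isolating opens
      set F : Set γ := R ∩ Oᶜ with hF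
      have hFcomp : IsCompact F := hRcomp.inter_right (isClosed_compl_iff.mpr hO)
      have hWo : ∀ z ∈ F, ∃ Wo : Set γ, IsOpen Wo ∧ Wo ∩ R = {z} := by
        intro z hz
        exact isolated_in_remainder e he' he hd hz.1 (fun h => hz.2 (h ▸ hpO))
      choose! Wo hWo1 hWo2 using hWo
      have hsub : F ⊆ ⋃ z ∈ F, Wo z := by
        intro z hz
        have : z ∈ Wo z ∩ R := by rw [hWo2 z hz]; exact rfl
        exact Set.mem_biUnion hz this.1
      obtain ⟨t, htF, htfin, hcov⟩ :=
        hFcomp.elim_finite_subcover_image (fun z hz => hWo1 z hz) hsub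
      have hFt : F ⊆ t := by
        intro z' hz'
        obtain ⟨z, hzt, hzW⟩ := Set.mem_iUnion₂.mp (hcov hz')
        have : z' ∈ Wo z ∩ R := ⟨hzW, hz'.1⟩
        rw [hWo2 z (htF hzt)] at this
        rwa [this]
      have hFfin : F.Finite := htfin.subset hFt
      -- the "bad" indices form a bounded set of naturals
      set Bad : Set Om := {x : Om | (φ x).val ∈ F} with hBad
      have hBadfin : Bad.Finite := by
        have h1 : Bad = φ ⁻¹' (Subtype.val ⁻¹' F) := rfl
        rw [h1]
        exact ((hFfin.preimage (Subtype.val_injective.injOn)).preimage hinj.injOn)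
      set ν : Om → ℕ := fun x => if h : x.val < Ordinal.omega0 then natOf h else 0 with hν
      obtain ⟨N, hN⟩ := (hBadfin.image ν).bddAbove
      have hgood : (Subtype.val ⁻¹' Set.Ioi ((N : ℕ) : Ordinal) : Set Om) ⊆ φ ⁻¹' U := by
        intro x hx
        have hxO : (φ x).val ∈ O := by
          by_contra hxF
          have hxBad : x ∈ Bad := ⟨(φ x).2, hxF⟩
          have hxlt : x.val < Ordinal.omega0 := by
            by_contra hxval
            rw [hφ_top x hxval] at hxF
            exact hxF hpO
          have hle : ν x ≤ N := hN ⟨x, hxBad, rfl⟩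
          have : x.val ≤ ((N : ℕ) : Ordinal) := by
            rw [natOf_spec hxlt]
            have : ν x = natOf hxlt := dif_pos hxlt
            rw [← this]
            exact_mod_cast hle
          exact absurd hx (not_lt.mpr this)
        exact hVU (hOV hxO)
      exact mem_of_superset (IsOpen.mem_nhds
        (isOpen_Ioi.preimage continuous_subtype_val) (Ordinal.nat_lt_omega0 N)) hgood
    · have hiso : IsOpen ({x} : Set Om) := isolated (val_lt_of_ne_top hx)
      have hp : 𝓝 x = pure x := (isOpen_singleton_iff_nhds_eq_pure x).mp hiso
      rw [ContinuousAt, hp]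
      exact tendsto_pure_nhds _ x
  exact ⟨(Continuous.homeoOfEquivCompactToT2
    (f := Equiv.ofBijective φ ⟨hinj, hsurj⟩) hφcont).symm⟩
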